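/- arXiv:1709.05235 — 5 statements merged into one kernel-verified Lean document; each statement's English description precedes it below -/
import Mathlib

section
/- Let a > 0, b > 0, A ≤ 0, B ∈ ℝ and h > 0, and define the probabilistic mean path loss L(h, r) = A / (1 + a·exp(−b·((180/π)·arctan(h/r) − a))) + 10·log₁₀(h² + r²) + B. Then the function r ↦ L(h, r) is strictly increasing on (0, ∞). -/
/-- The probabilistic mean path loss is strictly increasing in the horizontal distance. -/
theorem stmt_2 (a b A B h : ℝ) (ha : 0 < a) (hb : 0 < b) (hA : A ≤ 0) (hh : 0 < h) :
    StrictMonoOn (fun r : ℝ =>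
      A / (1 + a * Real.exp (-b * ((180 / Real.pi) * Real.arctan (h / r) - a)))
        + 10 * Real.logb 10 (h ^ 2 + r ^ 2) + B) (Set.Ioi (0 : ℝ)) := by
  intro x hx y hy hxy
  simp only [Set.mem_Ioi] at hx hy
  have hDx : (0:ℝ) < 1 + a * Real.exp (-b * ((180 / Real.pi) * Real.arctan (h / x) - a)) := by
    positivity
  have hDy : (0:ℝ) < 1 + a * Real.exp (-b * ((180 / Real.pi) * Real.arctan (h / y) - a)) := by
    positivity
  have hc : (0:ℝ) ≤ 180 / Real.pi := by positivity
  have harct : Real.arctan (h / y) ≤ Real.arctan (h / x) := by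
    exact Real.arctan_strictMono.monotone (div_le_div_of_nonneg_left hh.le hx hxy.le)
  have harg : -b * ((180 / Real.pi) * Real.arctan (h / x) - a)
      ≤ -b * ((180 / Real.pi) * Real.arctan (h / y) - a) := by
    have := mul_le_mul_of_nonneg_left harct hc
    nlinarith
  have hD : 1 + a * Real.exp (-b * ((180 / Real.pi) * Real.arctan (h / x) - a))
      ≤ 1 + a * Real.exp (-b * ((180 / Real.pi) * Real.arctan (h / y) - a)) := by
    have := Real.exp_le_exp.mpr harg
    nlinarith
  have h1 : A / (1 + a * Real.exp (-b * ((180 / Real.pi) * Real.arctan (h / x) - a)))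
      ≤ A / (1 + a * Real.exp (-b * ((180 / Real.pi) * Real.arctan (h / y) - a))) := by
    rw [div_le_div_iff₀ hDx hDy]
    nlinarith
  have h2 : Real.logb 10 (h ^ 2 + x ^ 2) < Real.logb 10 (h ^ 2 + y ^ 2) := by
    apply Real.logb_lt_logb (by norm_num) (by positivity)
    nlinarith
  simp only
  linarith
end

section
/- Let a > 0, b > 0, A ≤ 0, B ∈ ℝ and h > 0, and define L(h, r) = A / (1 + a·exp(−b·((180/π)·arctan(h/r) − a))) + 10·log₁₀(h² + r²) + B. For every threshold T with T > A / (1 + a·exp(−b·(90 − a))) + 10·log₁₀(h²) + B, there exists a unique R > 0 such that L(h, R) = T. -/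
open Real Filter Set Topology

private noncomputable def Dfun (a b h R : ℝ) : ℝ :=
  1 + a * Real.exp (-b * ((180 / Real.pi) * Real.arctan (h / R) - a))

private noncomputable def ffun (a b A B h R : ℝ) : ℝ :=
  A / Dfun a b h R + 10 * Real.logb 10 (h ^ 2 + R ^ 2) + B

private lemma Dfun_pos {a : ℝ} (ha : 0 < a) (b h R : ℝ) : 0 < Dfun a b h R := by
  unfold Dfun; positivity

private lemma Dfun_one_le {a : ℝ} (ha : 0 < a) (b h R : ℝ) : 1 ≤ Dfun a b h R := by
  unfold Dfun
  nlinarith [Real.exp_pos (-b * ((180 / Real.pi) * Real.arctan (h / R) - a))]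

private lemma ffun_strictMono {a b A B h : ℝ} (ha : 0 < a) (hb : 0 < b) (hA : A ≤ 0)
    (hh : 0 < h) : StrictMonoOn (ffun a b A B h) (Set.Ioi 0) := by
  intro R₁ hR₁ R₂ hR₂ h12
  simp only [Set.mem_Ioi] at hR₁ hR₂
  have hπ : (0:ℝ) < Real.pi := Real.pi_pos
  have hc : (0:ℝ) < 180 / Real.pi := by positivity
  have harctan : Real.arctan (h / R₂) < Real.arctan (h / R₁) := by
    exact Real.arctan_strictMono (div_lt_div_of_pos_left hh hR₁ h12)
  have hexp : Real.exp (-b * ((180 / Real.pi) * Real.arctan (h / R₁) - a)) ≤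
      Real.exp (-b * ((180 / Real.pi) * Real.arctan (h / R₂) - a)) := by
    apply Real.exp_le_exp.2
    nlinarith [mul_le_mul_of_nonneg_left (mul_le_mul_of_nonneg_left harctan.le hc.le) hb.le]
  have hD : Dfun a b h R₁ ≤ Dfun a b h R₂ := by
    unfold Dfun; nlinarith
  have hdiv : A / Dfun a b h R₁ ≤ A / Dfun a b h R₂ := by
    rw [div_le_div_iff₀ (Dfun_pos ha b h R₁) (Dfun_pos ha b h R₂)]
    nlinarith [Dfun_pos ha b h R₁, Dfun_pos ha b h R₂]
  have hlog : Real.logb 10 (h ^ 2 + R₁ ^ 2) < Real.logb 10 (h ^ 2 + R₂ ^ 2) := by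
    apply Real.logb_lt_logb (by norm_num) (by positivity)
    nlinarith
  unfold ffun
  linarith

private lemma ffun_continuousOn {a b A B h : ℝ} (ha : 0 < a) (hh : 0 < h) :
    ContinuousOn (ffun a b A B h) (Set.Ioi 0) := by
  have hDcont : ContinuousOn (fun R => Dfun a b h R) (Set.Ioi 0) := by
    unfold Dfun
    apply continuousOn_const.add
    apply continuousOn_const.mul
    apply Real.continuous_exp.comp_continuousOn
    apply continuousOn_const.mul
    apply ContinuousOn.sub _ continuousOn_const
    apply continuousOn_const.mul
    apply Real.continuous_arctan.comp_continuousOn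
    exact continuousOn_const.div continuousOn_id (fun x hx => ne_of_gt hx)
  unfold ffun
  apply ContinuousOn.add _ continuousOn_const
  apply ContinuousOn.add
  · exact continuousOn_const.div hDcont (fun R hR => (Dfun_pos ha b h R).ne')
  · apply continuousOn_const.mul
    intro x _
    have hcont : ContinuousAt (Real.logb 10) (h ^ 2 + x ^ 2) := by
      unfold Real.logb
      exact (Real.continuousAt_log (by positivity)).div_const _
    have h2 : ContinuousAt (Real.logb 10 ∘ fun R : ℝ => h ^ 2 + R ^ 2) x :=
      ContinuousAt.comp hcont (by fun_prop)
    exact ContinuousAt.continuousWithinAt h2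

private lemma ffun_tendsto_zero {a b A B h : ℝ} (ha : 0 < a) (hh : 0 < h) :
    Tendsto (ffun a b A B h) (𝓝[>] 0)
      (𝓝 (A / (1 + a * Real.exp (-b * (90 - a))) + 10 * Real.logb 10 (h ^ 2) + B)) := by
  have hπ : (0:ℝ) < Real.pi := Real.pi_pos
  have h1 : Tendsto (fun R : ℝ => h / R) (𝓝[>] 0) atTop := by
    have := tendsto_inv_nhdsGT_zero (𝕜 := ℝ)
    have := this.const_mul_atTop hh
    simpa [div_eq_mul_inv] using this
  have h2 : Tendsto (fun R : ℝ => Real.arctan (h / R)) (𝓝[>] 0) (𝓝 (Real.pi / 2)) :=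
    (tendsto_nhds_of_tendsto_nhdsWithin Real.tendsto_arctan_atTop).comp h1
  have h3 : Tendsto (fun R : ℝ => -b * ((180 / Real.pi) * Real.arctan (h / R) - a))
      (𝓝[>] 0) (𝓝 (-b * (90 - a))) := by
    have h90 : -b * ((180 / Real.pi) * (Real.pi / 2) - a) = -b * (90 - a) := by
      have : (180 / Real.pi) * (Real.pi / 2) = 90 := by
        field_simp
        norm_num
      rw [this]
    have h3' := ((h2.const_mul (180 / Real.pi)).sub_const a).const_mul (-b)
    rwa [h90] at h3'
  have hDt : Tendsto (fun R : ℝ => Dfun a b h R) (𝓝[>] 0)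
      (𝓝 (1 + a * Real.exp (-b * (90 - a)))) := by
    unfold Dfun
    exact (((Real.continuous_exp.tendsto _).comp h3).const_mul a).const_add 1
  have hD0 : (0:ℝ) < 1 + a * Real.exp (-b * (90 - a)) := by positivity
  have hdivt : Tendsto (fun R : ℝ => A / Dfun a b h R) (𝓝[>] 0)
      (𝓝 (A / (1 + a * Real.exp (-b * (90 - a))))) :=
    tendsto_const_nhds.div hDt hD0.ne'
  have hsq : Tendsto (fun R : ℝ => h ^ 2 + R ^ 2) (𝓝[>] 0) (𝓝 (h ^ 2)) := by
    have : Tendsto (fun R : ℝ => h ^ 2 + R ^ 2) (𝓝 0) (𝓝 (h ^ 2 + 0 ^ 2)) := by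
      exact (continuous_const.add (continuous_pow 2)).tendsto 0
    simpa using this.mono_left nhdsWithin_le_nhds
  have hlogt : Tendsto (fun R : ℝ => 10 * Real.logb 10 (h ^ 2 + R ^ 2)) (𝓝[>] 0)
      (𝓝 (10 * Real.logb 10 (h ^ 2))) := by
    have hcont : ContinuousAt (Real.logb 10) (h ^ 2) := by
      unfold Real.logb
      exact (Real.continuousAt_log (by positivity)).div_const _
    exact ((hcont.tendsto.comp hsq).const_mul 10)
  unfold ffun
  exact (hdivt.add hlogt).add_const B

/-- Existence and uniqueness of the coverage radius for any threshold above the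
limiting path loss directly below the UAV. -/
theorem stmt_3 (a b A B h : ℝ) (ha : 0 < a) (hb : 0 < b) (hA : A ≤ 0) (hh : 0 < h)
    (T : ℝ)
    (hT : T > A / (1 + a * Real.exp (-b * (90 - a))) + 10 * Real.logb 10 (h ^ 2) + B) :
    ∃! R : ℝ, 0 < R ∧
      A / (1 + a * Real.exp (-b * ((180 / Real.pi) * Real.arctan (h / R) - a)))
        + 10 * Real.logb 10 (h ^ 2 + R ^ 2) + B = T := by
  show ∃! R : ℝ, 0 < R ∧ ffun a b A B h R = T
  have hmono := ffun_strictMono ha hb hA hh (A := A) (B := B)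
  -- point below T near 0
  have hev1 : ∀ᶠ R in 𝓝[>] (0:ℝ), ffun a b A B h R < T :=
    (ffun_tendsto_zero ha hh).eventually_lt_const hT
  have hev1' : ∀ᶠ R in 𝓝[>] (0:ℝ), (0:ℝ) < R := eventually_mem_nhdsWithin
  obtain ⟨R₁, hfR₁, hR₁pos⟩ := (hev1.and hev1').exists
  -- point above T for large R
  have htop : Tendsto (ffun a b A B h) atTop atTop := by
    have hlb : ∀ᶠ R in atTop, A + (10 * Real.logb 10 (h ^ 2 + R ^ 2) + B) ≤ ffun a b A B h R := by
      filter_upwards with R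
      have h1 : 1 ≤ Dfun a b h R := Dfun_one_le ha b h R
      have h0 : 0 < Dfun a b h R := Dfun_pos ha b h R
      have : A ≤ A / Dfun a b h R := by
        rw [le_div_iff₀ h0]; nlinarith
      unfold ffun; linarith
    have hg : Tendsto (fun R : ℝ => A + (10 * Real.logb 10 (h ^ 2 + R ^ 2) + B)) atTop atTop := by
      apply tendsto_atTop_add_const_left
      apply tendsto_atTop_add_const_right
      apply Tendsto.const_mul_atTop (by norm_num : (0:ℝ) < 10)
      apply (Real.tendsto_logb_atTop (by norm_num : (1:ℝ) < 10)).comp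
      apply tendsto_atTop_add_const_left
      exact tendsto_pow_atTop two_ne_zero
    exact tendsto_atTop_mono' _ hlb hg
  obtain ⟨R₂, hfR₂, hR₂pos⟩ := ((htop.eventually_gt_atTop T).and (eventually_gt_atTop 0)).exists
  have hR₁₂ : R₁ < R₂ := by
    by_contra hle
    push_neg at hle
    have := hmono.monotoneOn (Set.mem_Ioi.2 hR₂pos) (Set.mem_Ioi.2 hR₁pos) hle
    linarith
  have hsub : Set.Icc R₁ R₂ ⊆ Set.Ioi 0 := fun x hx => lt_of_lt_of_le hR₁pos hx.1
  have hivt := intermediate_value_Icc hR₁₂.le ((ffun_continuousOn ha hh (b := b) (A := A) (B := B)).mono hsub)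
  obtain ⟨R, hRmem, hfR⟩ := hivt ⟨hfR₁.le, hfR₂.le⟩
  have hRpos : 0 < R := lt_of_lt_of_le hR₁pos hRmem.1
  refine ⟨R, ⟨hRpos, hfR⟩, ?_⟩
  rintro R' ⟨hR'pos, hfR'⟩
  exact hmono.injOn (Set.mem_Ioi.2 hR'pos) (Set.mem_Ioi.2 hRpos) (hfR'.trans hfR.symm)
end

section
/- Let a > 0, b > 0, A ≤ 0, B ∈ ℝ and h > 0, and define L(h, r) = A / (1 + a·exp(−b·((180/π)·arctan(h/r) − a))) + 10·log₁₀(h² + r²) + B. If R₁ > 0 and R₂ > 0 satisfy L(h, R₁) = T₁ and L(h, R₂) = T₂ with T₁ < T₂, then R₁ < R₂. -/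
/-- A larger path-loss threshold yields a larger coverage radius. -/
theorem stmt_4 (a b A B h : ℝ) (ha : 0 < a) (hb : 0 < b) (hA : A ≤ 0) (hh : 0 < h)
    (R₁ R₂ T₁ T₂ : ℝ) (hR₁ : 0 < R₁) (hR₂ : 0 < R₂)
    (h1 : A / (1 + a * Real.exp (-b * ((180 / Real.pi) * Real.arctan (h / R₁) - a)))
        + 10 * Real.logb 10 (h ^ 2 + R₁ ^ 2) + B = T₁)
    (h2 : A / (1 + a * Real.exp (-b * ((180 / Real.pi) * Real.arctan (h / R₂) - a)))
        + 10 * Real.logb 10 (h ^ 2 + R₂ ^ 2) + B = T₂)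
    (hT : T₁ < T₂) :
    R₁ < R₂ := by
  by_contra hcon
  push_neg at hcon
  -- hcon : R₂ ≤ R₁ ; show T₂ ≤ T₁, contradiction
  have harc : Real.arctan (h / R₁) ≤ Real.arctan (h / R₂) :=
    Real.arctan_strictMono.monotone (div_le_div_of_nonneg_left hh.le hR₂ hcon)
  have hpi : (0:ℝ) ≤ 180 / Real.pi := by positivity
  have hx : (180 / Real.pi) * Real.arctan (h / R₁) - a
      ≤ (180 / Real.pi) * Real.arctan (h / R₂) - a := by
    have := mul_le_mul_of_nonneg_left harc hpi
    linarith
  have hexp : Real.exp (-b * ((180 / Real.pi) * Real.arctan (h / R₂) - a))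
      ≤ Real.exp (-b * ((180 / Real.pi) * Real.arctan (h / R₁) - a)) := by
    apply Real.exp_le_exp.mpr
    nlinarith
  set d₁ := 1 + a * Real.exp (-b * ((180 / Real.pi) * Real.arctan (h / R₁) - a)) with hd1
  set d₂ := 1 + a * Real.exp (-b * ((180 / Real.pi) * Real.arctan (h / R₂) - a)) with hd2
  have hd₂pos : 0 < d₂ := by positivity
  have hdle : d₂ ≤ d₁ := by
    have := mul_le_mul_of_nonneg_left hexp ha.le
    rw [hd1, hd2]; linarith
  have hdiv : A / d₂ ≤ A / d₁ := by
    have hn : (0:ℝ) ≤ -A := by linarith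
    have := div_le_div_of_nonneg_left hn hd₂pos hdle
    have e1 : -A / d₁ = -(A / d₁) := by ring
    have e2 : -A / d₂ = -(A / d₂) := by ring
    rw [e1, e2] at this
    linarith
  have hlog : Real.logb 10 (h ^ 2 + R₂ ^ 2) ≤ Real.logb 10 (h ^ 2 + R₁ ^ 2) := by
    exact Real.logb_le_logb_of_le (by norm_num) (by positivity) (by nlinarith)
  linarith
end

section
/- Let a > 0, b > 0, A ≤ 0, B ∈ ℝ and h > 0, and define L(h, r) = A / (1 + a·exp(−b·((180/π)·arctan(h/r) − a))) + 10·log₁₀(h² + r²) + B. If R > 0 satisfies L(h, R) = T, then { r ∈ ℝ : 0 < r ∧ L(h, r) ≤ T } = (0, R], i.e., a point at horizontal distance r > 0 from the point below the UAV satisfies the path-loss requirement L(h, r) ≤ T if and only if r ≤ R. Consequently, the coverage region for threshold T is a circular disc of radius R centered at the UAV's horizontal location. -/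
lemma stmt_5_mono (a b A h : ℝ) (ha : 0 < a) (hb : 0 < b) (hA : A ≤ 0) (hh : 0 < h)
    {x y : ℝ} (hx : 0 < x) (hxy : x < y) :
    A / (1 + a * Real.exp (-b * ((180 / Real.pi) * Real.arctan (h / x) - a)))
        + 10 * Real.logb 10 (h ^ 2 + x ^ 2)
    < A / (1 + a * Real.exp (-b * ((180 / Real.pi) * Real.arctan (h / y) - a)))
        + 10 * Real.logb 10 (h ^ 2 + y ^ 2) := by
  have hy : 0 < y := hx.trans hxy
  have h1 : h / y < h / x := div_lt_div_of_pos_left hh hx hxy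
  have h2 : Real.arctan (h / y) < Real.arctan (h / x) := Real.arctan_strictMono h1
  have hpi : 0 < (180 / Real.pi) := by positivity
  have h3 : -b * ((180 / Real.pi) * Real.arctan (h / x) - a)
      < -b * ((180 / Real.pi) * Real.arctan (h / y) - a) := by
    have := mul_lt_mul_of_pos_left h2 hpi
    nlinarith
  have h4 := Real.exp_lt_exp.mpr h3
  set dx := 1 + a * Real.exp (-b * ((180 / Real.pi) * Real.arctan (h / x) - a)) with hdxd
  set dy := 1 + a * Real.exp (-b * ((180 / Real.pi) * Real.arctan (h / y) - a)) with hdyd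
  have hdx : 0 < dx := by positivity
  have hdy : 0 < dy := by positivity
  have hdd : dx < dy := by
    have := mul_lt_mul_of_pos_left h4 ha
    simp only [hdxd, hdyd]; linarith
  have hdiv : A / dx ≤ A / dy := by
    rw [div_le_div_iff₀ hdx hdy]; nlinarith
  have hlog : Real.logb 10 (h ^ 2 + x ^ 2) < Real.logb 10 (h ^ 2 + y ^ 2) :=
    Real.logb_lt_logb (by norm_num) (by positivity) (by nlinarith)
  linarith

/-- The coverage region for a threshold `T` is the disc of radius `R` where
`L(h, R) = T`: a point at horizontal distance `r > 0` is covered iff `r ≤ R`. -/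
theorem stmt_5 (a b A B h : ℝ) (ha : 0 < a) (hb : 0 < b) (hA : A ≤ 0) (hh : 0 < h)
    (R T : ℝ) (hR : 0 < R)
    (hRT : A / (1 + a * Real.exp (-b * ((180 / Real.pi) * Real.arctan (h / R) - a)))
        + 10 * Real.logb 10 (h ^ 2 + R ^ 2) + B = T) :
    {r : ℝ | 0 < r ∧
      A / (1 + a * Real.exp (-b * ((180 / Real.pi) * Real.arctan (h / r) - a)))
        + 10 * Real.logb 10 (h ^ 2 + r ^ 2) + B ≤ T} = Set.Ioc 0 R := by
  ext r
  simp only [Set.mem_setOf_eq, Set.mem_Ioc]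
  constructor
  · rintro ⟨hr, hle⟩
    refine ⟨hr, ?_⟩
    by_contra hgt
    push_neg at hgt
    have := stmt_5_mono a b A h ha hb hA hh hR hgt
    linarith
  · rintro ⟨hr, hle⟩
    refine ⟨hr, ?_⟩
    rcases eq_or_lt_of_le hle with heq | hlt
    · subst heq; linarith
    · have := stmt_5_mono a b A h ha hb hA hh hr hlt
      linarith
end

section
/- Let a > 0, b > 0, A, B ∈ ℝ, T ∈ ℝ, and define L(h, r) = A / (1 + a·exp(−b·((180/π)·arctan(h/r) − a))) + 10·log₁₀(h² + r²) + B. Let R : ℝ → ℝ be differentiable at a point h > 0 with R(h) > 0, and suppose L(h', R(h')) = T for all h' in a neighborhood of h. Define X(h) = (−9·ln(10)·A·a·b/π) · R(h)·exp(−b·((180/π)·arctan(h/R(h)) − a)) / (1 + a·exp(−b·((180/π)·arctan(h/R(h)) − a)))² − h. If R(h)² + h² + h·X(h) ≠ 0, then the derivative of h' ↦ R(h')² at h equals 2·X(h)·R(h)² / (R(h)² + h² + h·X(h)). -/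
/-- Implicit differentiation of the squared coverage radius (equations (16)-(17)). -/
theorem stmt_9 (a b A B T : ℝ) (ha : 0 < a) (hb : 0 < b)
    (R : ℝ → ℝ) (h : ℝ) (hh : 0 < h) (hRpos : 0 < R h)
    (hdiff : DifferentiableAt ℝ R h)
    (himp : ∀ᶠ h' in nhds h,
      A / (1 + a * Real.exp (-b * ((180 / Real.pi) * Real.arctan (h' / R h') - a)))
        + 10 * Real.logb 10 (h' ^ 2 + R h' ^ 2) + B = T)
    (X : ℝ)
    (hX : X = (-9 * Real.log 10 * A * a * b / Real.pi)
        * (R h * Real.exp (-b * ((180 / Real.pi) * Real.arctan (h / R h) - a)))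
        / (1 + a * Real.exp (-b * ((180 / Real.pi) * Real.arctan (h / R h) - a))) ^ 2
        - h)
    (hden : R h ^ 2 + h ^ 2 + h * X ≠ 0) :
    deriv (fun h' => R h' ^ 2) h = 2 * X * R h ^ 2 / (R h ^ 2 + h ^ 2 + h * X) := by
  have hd := hdiff.hasDerivAt
  set d := deriv R h with hd_def
  set ρ := R h with hρ_def
  have hρne : ρ ≠ 0 := hRpos.ne'
  set E := Real.exp (-b * ((180 / Real.pi) * Real.arctan (h / ρ) - a)) with hE_def
  have hEpos : 0 < E := Real.exp_pos _
  have hDpos : 0 < 1 + a * E := by positivity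
  have hDne : (1 + a * E) ≠ 0 := hDpos.ne'
  have hsum : (0:ℝ) < h ^ 2 + ρ ^ 2 := by positivity
  have hlog10 : (0:ℝ) < Real.log 10 := Real.log_pos (by norm_num)
  have hπ : Real.pi ≠ 0 := Real.pi_ne_zero
  -- derivative of inner quotient
  have h1 : HasDerivAt (fun h' => h' / R h') ((1 * ρ - h * d) / ρ ^ 2) h :=
    (hasDerivAt_id h).div hd hρne
  have h2 : HasDerivAt (fun h' => Real.arctan (h' / R h'))
      (1 / (1 + (h / ρ) ^ 2) * ((1 * ρ - h * d) / ρ ^ 2)) h :=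
    by have := (Real.hasDerivAt_arctan (h / ρ)).comp h h1; exact this
  set g' := 1 / (1 + (h / ρ) ^ 2) * ((1 * ρ - h * d) / ρ ^ 2) with hg'_def
  have h3 : HasDerivAt (fun h' => -b * ((180 / Real.pi) * Real.arctan (h' / R h') - a))
      (-b * (180 / Real.pi * g')) h := by
    simpa using (((h2.const_mul (180 / Real.pi)).sub_const a).const_mul (-b))
  have h4 : HasDerivAt
      (fun h' => Real.exp (-b * ((180 / Real.pi) * Real.arctan (h' / R h') - a)))
      (E * (-b * (180 / Real.pi * g'))) h := h3.exp
  have h5 : HasDerivAt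
      (fun h' => 1 + a * Real.exp (-b * ((180 / Real.pi) * Real.arctan (h' / R h') - a)))
      (a * (E * (-b * (180 / Real.pi * g')))) h := (h4.const_mul a).const_add 1
  have h6 : HasDerivAt
      (fun h' => A / (1 + a * Real.exp (-b * ((180 / Real.pi) * Real.arctan (h' / R h') - a))))
      ((0 * (1 + a * E) - A * (a * (E * (-b * (180 / Real.pi * g'))))) / (1 + a * E) ^ 2) h :=
    (hasDerivAt_const h A).div h5 hDne
  -- derivative of log part
  have h7 : HasDerivAt (fun h' => h' ^ 2 + R h' ^ 2)
      (2 * h ^ 1 * 1 + 2 * ρ ^ 1 * d) h := by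
    exact ((hasDerivAt_id h).pow 2).add (hd.pow 2)
  have h8 : HasDerivAt (fun h' => 10 * Real.logb 10 (h' ^ 2 + R h' ^ 2))
      (10 * ((2 * h ^ 1 * 1 + 2 * ρ ^ 1 * d) / (h ^ 2 + ρ ^ 2) / Real.log 10)) h := by
    simp only [Real.logb]
    exact ((h7.log hsum.ne').div_const (Real.log 10)).const_mul 10
  have hF : HasDerivAt
      (fun h' => A / (1 + a * Real.exp (-b * ((180 / Real.pi) * Real.arctan (h' / R h') - a)))
        + 10 * Real.logb 10 (h' ^ 2 + R h' ^ 2) + B)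
      ((0 * (1 + a * E) - A * (a * (E * (-b * (180 / Real.pi * g'))))) / (1 + a * E) ^ 2
        + 10 * ((2 * h ^ 1 * 1 + 2 * ρ ^ 1 * d) / (h ^ 2 + ρ ^ 2) / Real.log 10)) h :=
    (h6.add h8).add_const B
  have hF0 : HasDerivAt
      (fun h' => A / (1 + a * Real.exp (-b * ((180 / Real.pi) * Real.arctan (h' / R h') - a)))
        + 10 * Real.logb 10 (h' ^ 2 + R h' ^ 2) + B) 0 h :=
    (hasDerivAt_const h T).congr_of_eventuallyEq himp
  have eq0 := hF.unique hF0
  have hderiv2 : deriv (fun h' => R h' ^ 2) h = 2 * ρ ^ 1 * d := (hd.pow 2).deriv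
  rw [hderiv2]
  have key : d * (ρ ^ 2 + h ^ 2 + h * X) = X * ρ := by
    subst hX
    rw [hg'_def] at eq0
    field_simp at eq0 ⊢
    refine mul_left_cancel₀ (show (20:ℝ) * ρ * (h ^ 2 + ρ ^ 2) ≠ 0 by positivity) ?_
    linear_combination ρ ^ 2 * eq0
  rw [eq_div_iff hden]
  linear_combination 2 * ρ * key
end
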